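/- Every finite interval graph G can be partitioned into γ₂(G) sets each of radius at most 1 (each set contained in the closed neighborhood of one of its vertices), where γ₂(G) is the maximum size of a set of vertices with pairwise graph distance greater than 2. -/

import Mathlib

variable {V : Type*} [Fintype V] [DecidableEq V]

/-- `G` is an interval graph: the intersection graph of a family of
closed intervals on the real line. -/
def IsIntervalGraph (G : SimpleGraph V) : Prop :=
  ∃ f : V → ℝ × ℝ, (∀ v, (f v).1 ≤ (f v).2) ∧
    ∀ x y, x ≠ y →
      (G.Adj x y ↔ (Set.Icc (f x).1 (f x).2 ∩ Set.Icc (f y).1 (f y).2).Nonempty)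

/-- `S` is `2`-independent: distinct vertices of `S` are at distance greater than `2`. -/
def TwoIndependent (G : SimpleGraph V) (S : Finset V) : Prop :=
  ∀ x ∈ S, ∀ y ∈ S, x ≠ y → ¬ (G.Reachable x y ∧ G.dist x y ≤ 2)

/-- `γ₂(G)`: maximal size of a `2`-independent set. -/
noncomputable def gamma2 (G : SimpleGraph V) : ℕ :=
  sSup {n | ∃ S : Finset V, TwoIndependent G S ∧ S.card = n}

/-- `s` has radius at most 1: some vertex of `s` is adjacent (or equal) to all of `s`. -/
def RadiusAtMostOne (G : SimpleGraph V) (s : Finset V) : Prop :=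
  ∃ v ∈ s, ∀ u ∈ s, u = v ∨ G.Adj v u

private lemma walk_cases {G : SimpleGraph V} {x y : V} (p : G.Walk x y) (hp : p.length ≤ 2) :
    x = y ∨ G.Adj x y ∨ ∃ w, G.Adj x w ∧ G.Adj w y := by
  match p with
  | .nil => exact Or.inl rfl
  | .cons h .nil => exact Or.inr (Or.inl h)
  | .cons h (.cons h2 .nil) => exact Or.inr (Or.inr ⟨_, h, h2⟩)
  | .cons h (.cons h2 (.cons h3 q)) => simp [SimpleGraph.Walk.length_cons] at hp

/-- Geometric core: if `c` is a neighbor of `u` with maximal right endpoint,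
`u'` has right endpoint at least that of `u`, and `u'` is not in `N[c]`,
then `u'` is not within distance 2 of `u`. -/
private lemma core {G : SimpleGraph V} (f : V → ℝ × ℝ) (hf : ∀ v, (f v).1 ≤ (f v).2)
    (hadj : ∀ x y, x ≠ y → (G.Adj x y ↔ ((f x).1 ≤ (f y).2 ∧ (f y).1 ≤ (f x).2)))
    {u c u' : V}
    (hc : c = u ∨ G.Adj u c)
    (hmax : ∀ w, (w = u ∨ G.Adj u w) → (f w).2 ≤ (f c).2)
    (hru : (f u).2 ≤ (f u').2)
    (hnot : ¬(u' = c ∨ G.Adj c u'))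
    (h2 : G.Adj u u' ∨ ∃ w, G.Adj u w ∧ G.Adj w u') : False := by
  have hLc : (f c).1 ≤ (f u).2 := by
    rcases hc with rfl | h
    · exact hf c
    · exact ((hadj u c (G.ne_of_adj h)).mp h).2
  have hRuRc : (f u).2 ≤ (f c).2 := hmax u (Or.inl rfl)
  have hLu' : (f u').1 ≤ (f c).2 := by
    rcases h2 with h | ⟨w, h1, hw2⟩
    · exact le_trans ((hadj u u' (G.ne_of_adj h)).mp h).2 hRuRc
    · exact le_trans ((hadj w u' (G.ne_of_adj hw2)).mp hw2).2 (hmax w (Or.inr h1))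
  rcases eq_or_ne u' c with rfl | hne
  · exact hnot (Or.inl rfl)
  · exact hnot (Or.inr ((hadj c u' (Ne.symm hne)).mpr ⟨le_trans hLc hru, hLu'⟩))

/-- Greedy construction of a list of pairs `(uᵢ, cᵢ)` where `cᵢ` dominate `U`,
`cᵢ` is a maximal-right-endpoint member of `N[uᵢ]`, and the `uᵢ` satisfy
the key separation properties. -/
private lemma greedy (G : SimpleGraph V) (f : V → ℝ × ℝ)
    (hadj : ∀ x y, x ≠ y → (G.Adj x y ↔ ((f x).1 ≤ (f y).2 ∧ (f y).1 ≤ (f x).2))) :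
    ∀ (n : ℕ) (U : Finset V), U.card ≤ n →
      ∃ pairs : List (V × V),
        (∀ v ∈ U, ∃ p ∈ pairs, v = p.2 ∨ G.Adj p.2 v) ∧
        (∀ p ∈ pairs, p.1 ∈ U ∧ (p.2 = p.1 ∨ G.Adj p.1 p.2) ∧
          ∀ w, (w = p.1 ∨ G.Adj p.1 w) → (f w).2 ≤ (f p.2).2) ∧
        pairs.Pairwise (fun p q => (f p.1).2 ≤ (f q.1).2 ∧ ¬(q.1 = p.2 ∨ G.Adj p.2 q.1)) := by
  intro n
  induction n with
  | zero =>
    intro U hU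
    have hUe : U = ∅ := Finset.card_eq_zero.mp (Nat.le_zero.mp hU)
    subst hUe
    exact ⟨[], by simp, by simp, List.Pairwise.nil⟩
  | succ n ih =>
    intro U hU
    classical
    rcases U.eq_empty_or_nonempty with rfl | hne
    · exact ⟨[], by simp, by simp, List.Pairwise.nil⟩
    obtain ⟨u, huU, humin⟩ := U.exists_min_image (fun v => (f v).2) hne
    obtain ⟨c, hcmem, hcmax⟩ :=
      (Finset.univ.filter (fun w => w = u ∨ G.Adj u w)).exists_max_image (fun v => (f v).2)
        ⟨u, by simp⟩
    have hcN : c = u ∨ G.Adj u c := by simpa using hcmem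
    have hcmax' : ∀ w, (w = u ∨ G.Adj u w) → (f w).2 ≤ (f c).2 := by
      intro w hw
      exact hcmax w (by simpa using hw)
    set U' := U.filter (fun v => ¬(v = c ∨ G.Adj c v)) with hU'def
    have huNc : u = c ∨ G.Adj c u := by
      rcases hcN with h | h
      · exact Or.inl h.symm
      · exact Or.inr h.symm
    have hU'sub : U' ⊆ U.erase u := by
      intro v hv
      rw [hU'def, Finset.mem_filter] at hv
      refine Finset.mem_erase.mpr ⟨?_, hv.1⟩
      rintro rfl
      exact hv.2 huNc
    have hcard : U'.card ≤ n := by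
      have h1 := Finset.card_le_card hU'sub
      have h2 := Finset.card_erase_of_mem huU
      omega
    obtain ⟨rest, hdom, hinv, hpw⟩ := ih U' hcard
    refine ⟨(u, c) :: rest, ?_, ?_, ?_⟩
    · intro v hv
      by_cases h : v = c ∨ G.Adj c v
      · exact ⟨(u, c), List.mem_cons_self, h⟩
      · obtain ⟨p, hp, hp2⟩ := hdom v (by rw [hU'def, Finset.mem_filter]; exact ⟨hv, h⟩)
        exact ⟨p, List.mem_cons_of_mem _ hp, hp2⟩
    · intro p hp
      rcases List.mem_cons.mp hp with rfl | hp'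
      · exact ⟨huU, hcN, hcmax'⟩
      · obtain ⟨h1, h2, h3⟩ := hinv p hp'
        exact ⟨Finset.mem_of_mem_filter _ (hU'def ▸ h1), h2, h3⟩
    · refine List.Pairwise.cons ?_ hpw
      intro q hq
      have hq1 := (hinv q hq).1
      rw [hU'def, Finset.mem_filter] at hq1
      exact ⟨humin q.1 hq1.1, hq1.2⟩

theorem stmt10 (G : SimpleGraph V) (hG : IsIntervalGraph G) :
    ∃ P : Finset (Finset V),
      P.card = gamma2 G ∧
      (∀ s ∈ P, RadiusAtMostOne G s) ∧
      (∀ s ∈ P, ∀ t ∈ P, s ≠ t → Disjoint s t) ∧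
      (∀ v : V, ∃ s ∈ P, v ∈ s) := by
  classical
  obtain ⟨f, hf, hG'⟩ := hG
  have hadj : ∀ x y, x ≠ y → (G.Adj x y ↔ ((f x).1 ≤ (f y).2 ∧ (f y).1 ≤ (f x).2)) := by
    intro x y hxy
    rw [hG' x y hxy, Set.Icc_inter_Icc, Set.nonempty_Icc, sup_le_iff, le_inf_iff, le_inf_iff]
    constructor
    · rintro ⟨⟨_, h1⟩, h2, _⟩
      exact ⟨h1, h2⟩
    · rintro ⟨h1, h2⟩
      exact ⟨⟨hf x, h1⟩, h2, hf y⟩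
  obtain ⟨pairs, hdom, hinv, hpw⟩ :=
    greedy G f hadj (Fintype.card V) Finset.univ (le_of_eq Finset.card_univ)
  -- `uᵢ ∈ N[cᵢ]`
  have hmemN : ∀ p ∈ pairs, p.1 = p.2 ∨ G.Adj p.2 p.1 := by
    intro p hp
    rcases (hinv p hp).2.1 with h | h
    · exact Or.inl h.symm
    · exact Or.inr h.symm
  -- symmetrized pairwise relation
  have hsym : ∀ p ∈ pairs, ∀ q ∈ pairs, p ≠ q →
      (((f p.1).2 ≤ (f q.1).2 ∧ ¬(q.1 = p.2 ∨ G.Adj p.2 q.1)) ∨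
       ((f q.1).2 ≤ (f p.1).2 ∧ ¬(p.1 = q.2 ∨ G.Adj q.2 p.1))) := by
    have hpw' : pairs.Pairwise (fun p q =>
        (((f p.1).2 ≤ (f q.1).2 ∧ ¬(q.1 = p.2 ∨ G.Adj p.2 q.1)) ∨
         ((f q.1).2 ≤ (f p.1).2 ∧ ¬(p.1 = q.2 ∨ G.Adj q.2 p.1)))) :=
      hpw.imp (fun h => Or.inl h)
    exact fun p hp q hq hne => @List.Pairwise.forall _ _ _ ⟨fun a b h => h.symm⟩ hpw' p hp q hq hne
  -- the key distance argument applied to a pair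
  have key : ∀ a b : V × V, a ∈ pairs → b ∈ pairs →
      ((f a.1).2 ≤ (f b.1).2 ∧ ¬(b.1 = a.2 ∨ G.Adj a.2 b.1)) →
      (G.Adj a.1 b.1 ∨ ∃ w, G.Adj a.1 w ∧ G.Adj w b.1) → False := by
    rintro a b ha hb ⟨h1, h2⟩ h3
    exact core f hf hadj (hinv a ha).2.1 (hinv a ha).2.2 h1 h2 h3
  -- the packing
  have hpack : TwoIndependent G (pairs.map Prod.fst).toFinset := by
    rintro x hx y hy hxy ⟨hreach, hdist⟩
    obtain ⟨p, hp, rfl⟩ : ∃ p ∈ pairs, p.1 = x := by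
      simpa [List.mem_toFinset, List.mem_map] using hx
    obtain ⟨q, hq, rfl⟩ : ∃ q ∈ pairs, q.1 = y := by
      simpa [List.mem_toFinset, List.mem_map] using hy
    have hpq : p ≠ q := fun h => hxy (by rw [h])
    obtain ⟨w, hw⟩ := hreach.exists_walk_length_eq_dist
    have hcases := walk_cases w (by omega)
    rcases hcases with heq | hAdj | ⟨z, h1, h2⟩
    · exact hxy heq
    · rcases hsym p hp q hq hpq with hrel | hrel
      · exact key p q hp hq hrel (Or.inl hAdj)
      · exact key q p hq hp hrel (Or.inl hAdj.symm)
    · rcases hsym p hp q hq hpq with hrel | hrel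
      · exact key p q hp hq hrel (Or.inr ⟨z, h1, h2⟩)
      · exact key q p hq hp hrel (Or.inr ⟨z, h2.symm, h1.symm⟩)
  -- nodup of the u's and of the c's
  have hnodup_us : (pairs.map Prod.fst).Nodup := by
    rw [List.Nodup, List.pairwise_map]
    refine hpw.imp_of_mem ?_
    intro p q hp hq hrel hfst
    rcases hmemN p hp with h | h
    · exact hrel.2 (Or.inl (hfst.symm.trans h))
    · exact hrel.2 (Or.inr (hfst ▸ h))
  have hnodup_cs : (pairs.map Prod.snd).Nodup := by
    rw [List.Nodup, List.pairwise_map]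
    refine hpw.imp_of_mem ?_
    intro p q hp hq hrel hsnd
    rcases hmemN q hq with h | h
    · exact hrel.2 (Or.inl (h.trans hsnd.symm))
    · exact hrel.2 (Or.inr (hsnd.symm ▸ h))
  set C : Finset V := (pairs.map Prod.snd).toFinset with hCdef
  have hCcard : C.card = pairs.length := by
    rw [hCdef, List.toFinset_card_of_nodup hnodup_cs, List.length_map]
  have hPackcard : (pairs.map Prod.fst).toFinset.card = pairs.length := by
    rw [List.toFinset_card_of_nodup hnodup_us, List.length_map]
  -- domination by centers
  have hdomall : ∀ v : V, ∃ c, c ∈ C ∧ (v = c ∨ G.Adj c v) := by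
    intro v
    obtain ⟨p, hp, h⟩ := hdom v (Finset.mem_univ v)
    exact ⟨p.2, by rw [hCdef, List.mem_toFinset]; exact List.mem_map_of_mem hp, h⟩
  choose g hg1 hg2 using hdomall
  set φ : V → V := fun v => if v ∈ C then v else g v with hφdef
  have hφC : ∀ v, φ v ∈ C := by
    intro v
    rw [hφdef]
    by_cases h : v ∈ C
    · simpa [h]
    · simpa [h] using hg1 v
  have hφdom : ∀ v, v = φ v ∨ G.Adj (φ v) v := by
    intro v
    rw [hφdef]
    by_cases h : v ∈ C
    · simp [h]
    · simpa [h] using hg2 v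
  have hφfix : ∀ c ∈ C, φ c = c := by
    intro c hc
    rw [hφdef]
    simp [hc]
  -- injectivity of φ on any 2-independent set
  have hinj : ∀ S : Finset V, TwoIndependent G S → S.card ≤ C.card := by
    intro S hS
    refine Finset.card_le_card_of_injOn φ (fun a _ => hφC a) ?_
    intro s hs t ht hst
    by_contra hne
    have hcs : s = φ t ∨ G.Adj (φ t) s := hst ▸ hφdom s
    have hct := hφdom t
    refine hS s hs t ht hne ?_
    rcases hcs with h1 | h1 <;> rcases hct with h2 | h2
    · exact absurd (h1.trans h2.symm) hne
    · have ha : G.Adj s t := by rw [h1]; exact h2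
      have hd := SimpleGraph.dist_eq_one_iff_adj.mpr ha
      exact ⟨ha.reachable, by omega⟩
    · have ha : G.Adj s t := by
        have h1' : G.Adj (φ t) s := h1
        rw [← h2] at h1'
        exact h1'.symm
      have hd := SimpleGraph.dist_eq_one_iff_adj.mpr ha
      exact ⟨ha.reachable, by omega⟩
    · refine ⟨⟨SimpleGraph.Walk.cons h1.symm (SimpleGraph.Walk.cons h2 SimpleGraph.Walk.nil)⟩, ?_⟩
      have hd := SimpleGraph.dist_le
        (SimpleGraph.Walk.cons h1.symm (SimpleGraph.Walk.cons h2 SimpleGraph.Walk.nil))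
      simpa using hd
  -- gamma2 = pairs.length
  have hgamma : gamma2 G = pairs.length := by
    have hmem : pairs.length ∈ {n | ∃ S : Finset V, TwoIndependent G S ∧ S.card = n} :=
      ⟨(pairs.map Prod.fst).toFinset, hpack, hPackcard⟩
    have hub : ∀ n ∈ {n | ∃ S : Finset V, TwoIndependent G S ∧ S.card = n},
        n ≤ pairs.length := by
      rintro n ⟨S, hS, rfl⟩
      exact le_trans (hinj S hS) (le_of_eq hCcard)
    exact le_antisymm (csSup_le ⟨pairs.length, hmem⟩ hub)
      (le_csSup ⟨pairs.length, hub⟩ hmem)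
  -- the partition
  refine ⟨C.image (fun c => Finset.univ.filter (fun v => φ v = c)), ?_, ?_, ?_, ?_⟩
  · rw [hgamma, ← hCcard]
    apply Finset.card_image_of_injOn
    intro c₁ hc₁ c₂ hc₂ hset
    have hset' : Finset.univ.filter (fun v => φ v = c₁) =
        Finset.univ.filter (fun v => φ v = c₂) := hset
    have h1 : c₁ ∈ Finset.univ.filter (fun v => φ v = c₁) := by
      simp [hφfix c₁ hc₁]
    rw [hset'] at h1
    simpa [hφfix c₁ hc₁] using h1
  · intro s hs
    obtain ⟨c, hc, rfl⟩ := Finset.mem_image.mp hs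
    refine ⟨c, by simp [hφfix c hc], ?_⟩
    intro u hu
    have hφu : φ u = c := by simpa using hu
    rcases hφdom u with h | h
    · exact Or.inl (h.trans hφu)
    · exact Or.inr (hφu ▸ h)
  · intro s hs t ht hst
    obtain ⟨c₁, hc₁, rfl⟩ := Finset.mem_image.mp hs
    obtain ⟨c₂, hc₂, rfl⟩ := Finset.mem_image.mp ht
    rw [Finset.disjoint_left]
    intro a ha hb
    have h1 : φ a = c₁ := by simpa using ha
    have h2 : φ a = c₂ := by simpa using hb
    exact hst (by rw [← h1, ← h2])
  · intro v
    exact ⟨Finset.univ.filter (fun u => φ u = φ v),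
      Finset.mem_image_of_mem _ (hφC v), by simp⟩
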